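/- Assume E(X_0^β) < ∞, let δ > 0 be such that δ^β E(W_1^β) < 1, and define the random index J_δ = inf{k ≥ 1 : b^j Y_j > δ^j for all j ≥ k}. Then for every s ≥ 0 with e^s δ^β E(W_1^β) < 1, the exponential moment E(e^{s J_δ}) is finite. -/

import Mathlib

open MeasureTheory Set ProbabilityTheory
open scoped ENNReal

/-- The Beta distribution `Beta(a, c)` on `(0, 1)`. -/
noncomputable def betaMeas (a c : ℝ) : Measure ℝ :=
  (volume : Measure ℝ).withDensity fun x =>
    ENNReal.ofReal
      (if 0 < x ∧ x < 1 then
        Real.Gamma (a + c) / (Real.Gamma a * Real.Gamma c) * x ^ (a - 1) * (1 - x) ^ (c - 1)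
      else 0)

/-- The Gamma distribution `Γ(lam, r)` on `(0, ∞)` with rate `lam` and shape `r`. -/
noncomputable def gammaMeas (lam r : ℝ) : Measure ℝ :=
  (volume : Measure ℝ).withDensity fun x =>
    ENNReal.ofReal
      (if 0 < x then lam ^ r * x ^ (r - 1) * Real.exp (-(lam * x)) / Real.Gamma r else 0)

/-- The random index `J_δ = inf {k ≥ 1 : b^j Y_j > δ^j for all j ≥ k}`
(with value `⊤` if no such `k` exists). -/
noncomputable def Jdelta {Ω : Type*} (b δ : ℝ) (Y : ℕ → Ω → ℝ) (ω : Ω) : ℕ∞ :=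
  sInf ((↑) '' {k : ℕ | 1 ≤ k ∧ ∀ j, k ≤ j → δ ^ j < b ^ j * Y j ω})

lemma lintegral_finset_prod_of_iIndep {Ω ι : Type*} [MeasurableSpace Ω] {μ : Measure Ω}
    [IsProbabilityMeasure μ] {F : ι → Ω → ℝ≥0∞}
    (h : ProbabilityTheory.iIndepFun F μ)
    (hm : ∀ i, Measurable (F i)) (s : Finset ι) :
    ∫⁻ ω, ∏ i ∈ s, F i ω ∂μ = ∏ i ∈ s, ∫⁻ ω, F i ω ∂μ := by
  classical
  induction s using Finset.cons_induction with
  | empty => simp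
  | cons i s hi ih =>
    have hind : ProbabilityTheory.IndepFun (∏ j ∈ s, F j) (F i) μ :=
      h.indepFun_finsetProd_of_notMem hm hi
    have hprodm : Measurable (∏ j ∈ s, F j) := by
      have : (∏ j ∈ s, F j) = fun ω => ∏ j ∈ s, F j ω := by funext ω; simp
      rw [this]; exact Finset.measurable_prod _ fun j _ => hm j
    have key := lintegral_mul_eq_lintegral_mul_lintegral_of_indepFun hprodm (hm i) hind
    simp only [Finset.prod_cons]
    calc ∫⁻ ω, F i ω * ∏ j ∈ s, F j ω ∂μ
        = ∫⁻ ω, ((∏ j ∈ s, F j) * F i) ω ∂μ := by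
          apply lintegral_congr; intro ω; simp [mul_comm]
      _ = (∫⁻ ω, (∏ j ∈ s, F j) ω ∂μ) * ∫⁻ ω, F i ω ∂μ := key
      _ = (∫⁻ ω, ∏ j ∈ s, F j ω ∂μ) * ∫⁻ ω, F i ω ∂μ := by
          congr 1; apply lintegral_congr; intro ω; simp
      _ = (∫⁻ ω, F i ω ∂μ) * ∏ j ∈ s, ∫⁻ ω, F j ω ∂μ := by rw [ih, mul_comm]

lemma gammaMeas_Iic_le {β : ℝ} (hβ : 0 < β) {t : ℝ} (ht : 0 < t) :
    gammaMeas 1 β (Iic t) ≤ ENNReal.ofReal (t ^ β / Real.Gamma (β + 1)) := by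
  have hΓ : 0 < Real.Gamma β := Real.Gamma_pos_of_pos hβ
  rw [gammaMeas, withDensity_apply _ measurableSet_Iic]
  set g : ℝ → ℝ≥0∞ := fun x =>
    ENNReal.ofReal (if 0 < x then (1:ℝ) ^ β * x ^ (β - 1) * Real.exp (-(1 * x)) / Real.Gamma β else 0) with hg
  have hzero : ∀ x, g x = (Ioi (0:ℝ)).indicator g x := by
    intro x
    by_cases hx : 0 < x
    · rw [Set.indicator_of_mem (mem_Ioi.2 hx)]
    · rw [Set.indicator_of_notMem (by simpa using hx), hg]; simp [if_neg hx]
  calc ∫⁻ x in Iic t, g x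
      = ∫⁻ x in Iic t, (Ioi (0:ℝ)).indicator g x := by
        apply lintegral_congr; intro x; exact hzero x
    _ = ∫⁻ x in Ioc 0 t, g x := by
        rw [lintegral_indicator measurableSet_Ioi, Measure.restrict_restrict measurableSet_Ioi,
          Ioi_inter_Iic]
    _ ≤ ∫⁻ x in Ioc 0 t, ENNReal.ofReal (x ^ (β - 1) / Real.Gamma β) := by
        apply setLIntegral_mono (by fun_prop) ?_
        intro x hx
        rw [hg]
        apply ENNReal.ofReal_le_ofReal
        rw [if_pos hx.1, Real.one_rpow, one_mul, one_mul]
        calc x ^ (β - 1) * Real.exp (-x) / Real.Gamma β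
            ≤ x ^ (β - 1) * 1 / Real.Gamma β := by
              gcongr
              · exact Real.rpow_nonneg hx.1.le _
              · exact Real.exp_le_one_iff.2 (by linarith [hx.1])
          _ = x ^ (β - 1) / Real.Gamma β := by rw [mul_one]
    _ = ENNReal.ofReal (∫ x in Ioc 0 t, x ^ (β - 1) / Real.Gamma β) := by
        rw [ofReal_integral_eq_lintegral_ofReal]
        · exact ((intervalIntegrable_iff_integrableOn_Ioc_of_le ht.le).mp
            (intervalIntegral.intervalIntegrable_rpow' (by linarith))).div_const _
        · exact (ae_restrict_iff' measurableSet_Ioc).2 (Filter.Eventually.of_forall fun x hx =>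
            div_nonneg (Real.rpow_nonneg hx.1.le _) hΓ.le)
    _ = ENNReal.ofReal (t ^ β / Real.Gamma (β + 1)) := by
        rw [integral_div, ← intervalIntegral.integral_of_le ht.le,
          integral_rpow (Or.inl (by linarith))]
        rw [sub_add_cancel, Real.zero_rpow hβ.ne', sub_zero, Real.Gamma_add_one hβ.ne',
          div_div]

/-- Finiteness of the exponential moment `E(e^{s J_δ})` for
`e^s δ^β E(W₁^β) < 1`. -/
theorem Jdelta_exponential_moment
    {Ω : Type*} [MeasurableSpace Ω] (P : Measure Ω) [IsProbabilityMeasure P]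
    (α β b : ℝ) (hα : 0 < α) (hβ : 0 < β) (hb : 0 < b)
    (W G : ℕ → Ω → ℝ) (X0 : Ω → ℝ) (X Y : ℕ → Ω → ℝ)
    (hWm : ∀ n, Measurable (W n)) (hGm : ∀ n, Measurable (G n)) (hX0m : Measurable X0)
    (hW : ∀ n, Measure.map (W n) P = betaMeas α β)
    (hG : ∀ n, Measure.map (G n) P = gammaMeas 1 β)
    (hindep : ProbabilityTheory.iIndepFun
      (Sum.elim W (Sum.elim G fun _ : Unit => X0)) P)
    (hX0pos : ∀ ω, 0 < X0 ω)
    (hX0 : X 0 = X0) (hXrec : ∀ n ω, X (n + 1) ω = b * X n ω * W n ω)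
    (hY : ∀ n ω, Y (n + 1) ω = G n ω / X (n + 1) ω)
    (hX0int : Integrable (fun ω => X0 ω ^ β) P)
    (δ : ℝ) (hδ : 0 < δ) (hr : δ ^ β * (∫ ω, W 0 ω ^ β ∂P) < 1)
    (s : ℝ) (hs : 0 ≤ s) (hsr : Real.exp s * (δ ^ β * ∫ ω, W 0 ω ^ β ∂P) < 1) :
    (∫⁻ ω, (if Jdelta b δ Y ω = ⊤ then (⊤ : ENNReal)
      else ENNReal.ofReal (Real.exp (s * ((Jdelta b δ Y ω).toNat : ℝ)))) ∂P) < ⊤ := by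
  classical
  -- measurability of X and Y
  have hXm : ∀ n, Measurable (X n) := by
    intro n; induction n with
    | zero => rw [hX0]; exact hX0m
    | succ n ih =>
      have : X (n+1) = fun ω => b * X n ω * W n ω := funext (hXrec n)
      rw [this]; exact (measurable_const.mul ih).mul (hWm n)
  have hYm : ∀ n, Measurable (Y (n+1)) := by
    intro n
    have : Y (n+1) = fun ω => G n ω / X (n+1) ω := funext (hY n)
    rw [this]; exact (hGm n).div (hXm (n+1))
  -- formula for X
  have hXeq : ∀ n ω, X n ω = b ^ n * (X0 ω * ∏ i ∈ Finset.range n, W i ω) := by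
    intro n; induction n with
    | zero => intro ω; simp [hX0]
    | succ n ih =>
      intro ω
      rw [hXrec n ω, ih ω, Finset.prod_range_succ, pow_succ]
      ring
  -- a.e. W i ∈ Ioo 0 1
  have hWae : ∀ i, ∀ᵐ ω ∂P, W i ω ∈ Ioo (0:ℝ) 1 := by
    intro i
    have hms : MeasurableSet ((Ioo (0:ℝ) 1)ᶜ) := measurableSet_Ioo.compl
    have h0 : P ((W i) ⁻¹' (Ioo (0:ℝ) 1)ᶜ) = 0 := by
      rw [← Measure.map_apply (hWm i) hms, hW i, betaMeas, withDensity_apply _ hms]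
      rw [setLIntegral_congr_fun hms ?_, lintegral_zero]
      intro x hx
      dsimp only
      rw [if_neg (show ¬(0 < x ∧ x < 1) from hx)]
      exact ENNReal.ofReal_zero
    rw [ae_iff]
    convert h0 using 2
    rfl
  have hWall : ∀ᵐ ω ∂P, ∀ i, W i ω ∈ Ioo (0:ℝ) 1 := ae_all_iff.2 hWae
  -- integrability and lintegrals of W^β, X0^β
  have hWb_nonneg : ∀ᵐ ω ∂P, 0 ≤ W 0 ω ^ β := (hWae 0).mono fun ω h => Real.rpow_nonneg h.1.le β
  have hrpm : Measurable fun x : ℝ => x ^ β := (Real.continuous_rpow_const hβ.le).measurable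
  have hWmeas : Measurable fun ω => W 0 ω ^ β := hrpm.comp (hWm 0)
  have hWint : Integrable (fun ω => W 0 ω ^ β) P := by
    apply Integrable.mono' (integrable_const (1:ℝ)) hWmeas.aestronglyMeasurable
    filter_upwards [hWae 0] with ω h
    rw [Real.norm_eq_abs, abs_of_nonneg (Real.rpow_nonneg h.1.le β)]
    exact Real.rpow_le_one h.1.le h.2.le hβ.le
  have hIWnn : 0 ≤ ∫ ω, W 0 ω ^ β ∂P := integral_nonneg_of_ae hWb_nonneg
  have hφm : Measurable fun x : ℝ => ENNReal.ofReal (x ^ β) :=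
    hrpm.ennreal_ofReal
  have hEW : ∀ i, ∫⁻ ω, ENNReal.ofReal (W i ω ^ β) ∂P = ENNReal.ofReal (∫ ω, W 0 ω ^ β ∂P) := by
    intro i
    have h1 : ∫⁻ ω, ENNReal.ofReal (W i ω ^ β) ∂P = ∫⁻ x, ENNReal.ofReal (x ^ β) ∂(P.map (W i)) :=
      (lintegral_map hφm (hWm i)).symm
    have h2 : ENNReal.ofReal (∫ ω, W 0 ω ^ β ∂P)
        = ∫⁻ x, ENNReal.ofReal (x ^ β) ∂(P.map (W 0)) := by
      rw [lintegral_map hφm (hWm 0), ofReal_integral_eq_lintegral_ofReal hWint hWb_nonneg]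
    rw [h1, h2, hW i, hW 0]

  have hK : ∫⁻ ω, ENNReal.ofReal (X0 ω ^ β) ∂P = ENNReal.ofReal (∫ ω, X0 ω ^ β ∂P) :=
    (ofReal_integral_eq_lintegral_ofReal hX0int
      (Filter.Eventually.of_forall fun ω => Real.rpow_nonneg (hX0pos ω).le β)).symm
  -- constants
  set IW := ∫ ω, W 0 ω ^ β ∂P with hIWdef
  set ρ : ℝ≥0∞ := ENNReal.ofReal (δ ^ β * IW) with hρdef
  have hρ1 : ρ < 1 := ENNReal.ofReal_lt_one.2 hr
  have hρsplit : ρ = ENNReal.ofReal (δ ^ β) * ENNReal.ofReal IW :=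
    ENNReal.ofReal_mul (Real.rpow_nonneg hδ.le β)
  set q : ℝ≥0∞ := ENNReal.ofReal (Real.exp s) with hqdef
  have hqtop : q ≠ ⊤ := ENNReal.ofReal_ne_top
  have hqρ : q * ρ < 1 := by
    rw [hqdef, hρdef, ← ENNReal.ofReal_mul (Real.exp_nonneg s)]
    exact ENNReal.ofReal_lt_one.2 hsr
  set K : ℝ≥0∞ := ENNReal.ofReal (∫ ω, X0 ω ^ β ∂P) with hKdef
  set Γc : ℝ≥0∞ := ENNReal.ofReal (Real.Gamma (β + 1)) with hΓdef
  have hΓpos : 0 < Γc := ENNReal.ofReal_pos.2 (Real.Gamma_pos_of_pos (by linarith))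
  set C : ℝ≥0∞ := K / Γc with hCdef
  have hCfin : C ≠ ⊤ := (ENNReal.div_lt_top ENNReal.ofReal_ne_top hΓpos.ne').ne
  -- the independent family composed with x ↦ ofReal (x^β)
  set Z := Sum.elim W (Sum.elim G fun _ : Unit => X0) with hZdef
  have hZm : ∀ i, Measurable (Z i) := by
    rintro (i | i | ⟨⟩)
    · exact hWm i
    · exact hGm i
    · exact hX0m
  set F : (ℕ ⊕ (ℕ ⊕ Unit)) → Ω → ℝ≥0∞ := fun i => (fun x => ENNReal.ofReal (x ^ β)) ∘ Z i
    with hFdef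
  have hFindep : iIndepFun F P := hindep.comp _ (fun i => hφm)
  have hFm : ∀ i, Measurable (F i) := fun i => hφm.comp (hZm i)
  have hinl_inj : Function.Injective (Sum.inl : ℕ → ℕ ⊕ (ℕ ⊕ Unit)) := Sum.inl_injective
  have hprodint : ∀ m : ℕ,
      ∫⁻ ω, (ENNReal.ofReal (X0 ω ^ β)
        * ∏ i ∈ Finset.range (m+1), ENNReal.ofReal (W i ω ^ β)) ∂P
      = K * ENNReal.ofReal IW ^ (m+1) := by
    intro m
    have hnm : (Sum.inr (Sum.inr ()) : ℕ ⊕ (ℕ ⊕ Unit))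
        ∉ (Finset.range (m+1)).image Sum.inl := by simp
    have h1 : ∀ ω, ENNReal.ofReal (X0 ω ^ β)
        * ∏ i ∈ Finset.range (m+1), ENNReal.ofReal (W i ω ^ β)
        = ∏ j ∈ insert (Sum.inr (Sum.inr ())) ((Finset.range (m+1)).image Sum.inl), F j ω := by
      intro ω
      rw [Finset.prod_insert hnm, Finset.prod_image (fun a _ c _ h => hinl_inj h)]
      rfl
    rw [lintegral_congr h1, lintegral_finset_prod_of_iIndep hFindep hFm,
      Finset.prod_insert hnm, Finset.prod_image (fun a _ c _ h => hinl_inj h)]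
    have e0 : ∫⁻ ω, F (Sum.inr (Sum.inr ())) ω ∂P = K := by
      rw [← hK]; rfl
    have e1 : ∀ i, ∫⁻ ω, F (Sum.inl i) ω ∂P = ENNReal.ofReal IW := by
      intro i
      rw [← hEW i]; rfl
    rw [e0]
    congr 1
    rw [Finset.prod_congr rfl fun i _ => e1 i, Finset.prod_const, Finset.card_range]
  -- the key estimate : P(b^{m+1} Y_{m+1} ≤ δ^{m+1}) ≤ C ρ^{m+1}
  have hA : ∀ m : ℕ, P {ω | b ^ (m+1) * Y (m+1) ω ≤ δ ^ (m+1)} ≤ C * ρ ^ (m+1) := by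
    intro m
    set T : Ω → ℝ := fun ω => δ ^ (m+1) * (X0 ω * ∏ i ∈ Finset.range (m+1), W i ω) with hTdef
    have hTm : Measurable T :=
      measurable_const.mul (hX0m.mul (Finset.measurable_prod _ fun i _ => hWm i))
    -- event inclusion (a.e.)
    have hsub : P {ω | b ^ (m+1) * Y (m+1) ω ≤ δ ^ (m+1)} ≤ P {ω | G m ω ≤ T ω} := by
      apply measure_mono_ae
      filter_upwards [hWall] with ω hWω hmem
      have hD : 0 < X0 ω * ∏ i ∈ Finset.range (m+1), W i ω :=
        mul_pos (hX0pos ω) (Finset.prod_pos fun i _ => (hWω i).1)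
      have hbp : (0:ℝ) < b ^ (m+1) := pow_pos hb _
      have hYv : b ^ (m+1) * Y (m+1) ω
          = G m ω / (X0 ω * ∏ i ∈ Finset.range (m+1), W i ω) := by
        rw [hY m ω, hXeq (m+1) ω]
        field_simp
      replace hmem : b ^ (m+1) * Y (m+1) ω ≤ δ ^ (m+1) := hmem
      rw [hYv, div_le_iff₀ hD] at hmem
      show G m ω ≤ T ω
      rw [hTdef]
      dsimp only
      linarith
    -- independence of T and G m
    have hindTG : IndepFun T (G m) P := by
      classical
      set Sf : Finset (ℕ ⊕ (ℕ ⊕ Unit)) :=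
        insert (Sum.inr (Sum.inr ())) ((Finset.range (m+1)).image Sum.inl) with hSfdef
      have hdisj : Disjoint Sf ({Sum.inr (Sum.inl m)} : Finset (ℕ ⊕ (ℕ ⊕ Unit))) := by
        simp [hSfdef]
      have base := hindep.indepFun_finset Sf {Sum.inr (Sum.inl m)} hdisj hZm
      have hmem0 : (Sum.inr (Sum.inr ()) : ℕ ⊕ (ℕ ⊕ Unit)) ∈ Sf := Finset.mem_insert_self _ _
      have hmemi : ∀ i : {x // x ∈ Finset.range (m+1)},
          (Sum.inl i.1 : ℕ ⊕ (ℕ ⊕ Unit)) ∈ Sf :=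
        fun i => Finset.mem_insert_of_mem (Finset.mem_image_of_mem _ i.2)
      set φ : ({x // x ∈ Sf} → ℝ) → ℝ := fun v =>
        δ ^ (m+1) * (v ⟨_, hmem0⟩
          * ∏ i ∈ (Finset.range (m+1)).attach, v ⟨Sum.inl i.1, hmemi i⟩) with hφdef
      set ψ : ({x // x ∈ ({Sum.inr (Sum.inl m)} : Finset (ℕ ⊕ (ℕ ⊕ Unit)))} → ℝ) → ℝ :=
        fun v => v ⟨Sum.inr (Sum.inl m), Finset.mem_singleton_self _⟩ with hψdef
      have hφm' : Measurable φ := measurable_const.mul ((measurable_pi_apply _).mul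
        (Finset.measurable_prod _ fun i _ => measurable_pi_apply _))
      have hψm : Measurable ψ := measurable_pi_apply _
      have hcomp := base.comp hφm' hψm
      have eφ : (φ ∘ fun a (i : {x // x ∈ Sf}) => Z i.1 a) = T := by
        funext ω
        show δ ^ (m+1) * (Z (Sum.inr (Sum.inr ())) ω
          * ∏ i ∈ (Finset.range (m+1)).attach, Z (Sum.inl i.1) ω) = T ω
        have h2 : ∏ i ∈ (Finset.range (m+1)).attach, Z (Sum.inl i.1) ω
            = ∏ i ∈ Finset.range (m+1), W i ω := Finset.prod_attach (Finset.range (m+1)) (fun i => W i ω)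
        rw [h2]
        rfl
      have eψ : (ψ ∘ fun a (i : {x // x ∈ ({Sum.inr (Sum.inl m)} : Finset (ℕ ⊕ (ℕ ⊕ Unit)))}) => Z i.1 a) = G m := by
        funext ω
        show Z (Sum.inr (Sum.inl m)) ω = G m ω
        rw [hZdef]; rfl
      rw [eφ, eψ] at hcomp
      exact hcomp
    -- rewriting P(G ≤ T) via the product law
    have hmap : P.map (fun ω => (T ω, G m ω)) = (P.map T).prod (P.map (G m)) :=
      (indepFun_iff_map_prod_eq_prod_map_map hTm.aemeasurable (hGm m).aemeasurable).1 hindTG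
    have hcdfm : Measurable fun t : ℝ => gammaMeas 1 β (Iic t) :=
      Monotone.measurable fun a c hac => measure_mono (Iic_subset_Iic.2 hac)
    have hPG : P {ω | G m ω ≤ T ω} = ∫⁻ ω, gammaMeas 1 β (Iic (T ω)) ∂P := by
      have hmsle : MeasurableSet {p : ℝ × ℝ | p.2 ≤ p.1} :=
        measurableSet_le measurable_snd measurable_fst
      have hset : {ω | G m ω ≤ T ω} = (fun ω => (T ω, G m ω)) ⁻¹' {p : ℝ × ℝ | p.2 ≤ p.1} := rfl
      rw [hset, ← Measure.map_apply (hTm.prodMk (hGm m)) hmsle, hmap,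
        Measure.prod_apply hmsle]
      have hpre : ∀ t : ℝ, (Prod.mk t ⁻¹' {p : ℝ × ℝ | p.2 ≤ p.1}) = Iic t := fun t => rfl
      simp_rw [hpre, hG m]
      exact lintegral_map hcdfm hTm
    -- the gamma cdf bound, a.e.
    have hbd : ∫⁻ ω, gammaMeas 1 β (Iic (T ω)) ∂P
        ≤ ∫⁻ ω, ENNReal.ofReal (T ω ^ β) / Γc ∂P := by
      apply lintegral_mono_ae
      filter_upwards [hWall] with ω hWω
      have hTpos : 0 < T ω := mul_pos (pow_pos hδ _)
        (mul_pos (hX0pos ω) (Finset.prod_pos fun i _ => (hWω i).1))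
      calc gammaMeas 1 β (Iic (T ω)) ≤ ENNReal.ofReal (T ω ^ β / Real.Gamma (β+1)) :=
            gammaMeas_Iic_le hβ hTpos
        _ = ENNReal.ofReal (T ω ^ β) / Γc :=
            ENNReal.ofReal_div_of_pos (Real.Gamma_pos_of_pos (by linarith))
    -- computing ∫⁻ ofReal (T^β)
    have hTβ : ∀ᵐ ω ∂P, ENNReal.ofReal (T ω ^ β)
        = ENNReal.ofReal ((δ ^ β) ^ (m+1)) * (ENNReal.ofReal (X0 ω ^ β)
            * ∏ i ∈ Finset.range (m+1), ENNReal.ofReal (W i ω ^ β)) := by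
      filter_upwards [hWall] with ω hWω
      have h0X : (0:ℝ) ≤ X0 ω := (hX0pos ω).le
      have h0W : ∀ i ∈ Finset.range (m+1), (0:ℝ) ≤ W i ω := fun i _ => (hWω i).1.le
      have hprodnn : (0:ℝ) ≤ ∏ i ∈ Finset.range (m+1), W i ω := Finset.prod_nonneg h0W
      have e1 : T ω ^ β
          = (δ ^ (m+1)) ^ β * (X0 ω ^ β * (∏ i ∈ Finset.range (m+1), W i ω) ^ β) := by
        rw [hTdef]
        dsimp only
        rw [Real.mul_rpow (by positivity) (by positivity), Real.mul_rpow h0X hprodnn]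
      have e2 : ((δ:ℝ) ^ (m+1)) ^ β = (δ ^ β) ^ (m+1) := by
        rw [← Real.rpow_natCast δ (m+1), ← Real.rpow_natCast (δ ^ β) (m+1),
          ← Real.rpow_mul hδ.le, ← Real.rpow_mul hδ.le, mul_comm]
      have e3 : (∏ i ∈ Finset.range (m+1), W i ω) ^ β
          = ∏ i ∈ Finset.range (m+1), W i ω ^ β :=
        (Real.finset_prod_rpow _ _ h0W β).symm
      rw [e1, e2, e3, ENNReal.ofReal_mul (by positivity),
        ENNReal.ofReal_mul (Real.rpow_nonneg h0X β),
        ENNReal.ofReal_prod_of_nonneg (fun i hi => Real.rpow_nonneg (h0W i hi) β)]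
    have hTint : ∫⁻ ω, ENNReal.ofReal (T ω ^ β) ∂P
        = ENNReal.ofReal ((δ ^ β) ^ (m+1)) * (K * ENNReal.ofReal IW ^ (m+1)) := by
      have hmX : Measurable fun ω => ENNReal.ofReal (X0 ω ^ β)
          * ∏ i ∈ Finset.range (m+1), ENNReal.ofReal (W i ω ^ β) :=
        (hrpm.ennreal_ofReal.comp hX0m).mul
          (Finset.measurable_prod _ fun i _ => hrpm.ennreal_ofReal.comp (hWm i))
      rw [lintegral_congr_ae hTβ, lintegral_const_mul _ hmX, hprodint m]
    -- putting it together
    calc P {ω | b ^ (m+1) * Y (m+1) ω ≤ δ ^ (m+1)}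
        ≤ P {ω | G m ω ≤ T ω} := hsub
      _ = ∫⁻ ω, gammaMeas 1 β (Iic (T ω)) ∂P := hPG
      _ ≤ ∫⁻ ω, ENNReal.ofReal (T ω ^ β) / Γc ∂P := hbd
      _ = (∫⁻ ω, ENNReal.ofReal (T ω ^ β) ∂P) / Γc := by
          have hmTβ : Measurable fun ω => ENNReal.ofReal (T ω ^ β) :=
            hrpm.ennreal_ofReal.comp hTm
          simp_rw [div_eq_mul_inv]
          exact lintegral_mul_const _ hmTβ
      _ = C * ρ ^ (m+1) := by
          rw [hTint, hρsplit, hCdef, ENNReal.ofReal_pow (Real.rpow_nonneg hδ.le β),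
            mul_pow, div_eq_mul_inv, div_eq_mul_inv]
          ring
  -- basic facts about Jdelta
  have hJ1 : ∀ ω, 1 ≤ Jdelta b δ Y ω := by
    intro ω
    apply le_sInf
    rintro x ⟨k, ⟨hk, -⟩, rfl⟩
    exact_mod_cast hk
  have hJle : ∀ n : ℕ, 1 ≤ n → ∀ ω,
      (Jdelta b δ Y ω ≤ n ↔ ∀ j, n ≤ j → δ ^ j < b ^ j * Y j ω) := by
    intro n hn ω
    constructor
    · intro h j hj
      by_contra hc
      push_neg at hc
      have hlow : ((j+1 : ℕ) : ℕ∞) ≤ Jdelta b δ Y ω := by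
        apply le_sInf
        rintro x ⟨k, ⟨hk1, hk2⟩, rfl⟩
        have hk3 : j + 1 ≤ k := by
          by_contra h'
          push_neg at h'
          exact absurd (hk2 j (by omega)) (not_lt.2 hc)
        exact_mod_cast hk3
      have h2 : ((j+1:ℕ):ℕ∞) ≤ (n:ℕ∞) := hlow.trans h
      have h3 : j + 1 ≤ n := by exact_mod_cast h2
      omega
    · intro h
      exact sInf_le ⟨n, ⟨hn, h⟩, rfl⟩
  have hJgt : ∀ (k : ℕ) (ω : Ω), (((k+1:ℕ):ℕ∞) < Jdelta b δ Y ω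
      ↔ ∃ j, k+1 ≤ j ∧ b ^ j * Y j ω ≤ δ ^ j) := by
    intro k ω
    rw [← not_le, hJle (k+1) (by omega) ω]
    push_neg
    rfl
  have hJsetm : ∀ k : ℕ, MeasurableSet {ω | ((k+1:ℕ):ℕ∞) < Jdelta b δ Y ω} := by
    intro k
    have hset : {ω | ((k+1:ℕ):ℕ∞) < Jdelta b δ Y ω}
        = ⋃ j : ℕ, {ω | k+1 ≤ j ∧ b ^ j * Y j ω ≤ δ ^ j} := by
      ext ω
      simp only [mem_setOf_eq, mem_iUnion]
      exact (hJgt k ω).trans (by tauto)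
    rw [hset]
    apply MeasurableSet.iUnion
    intro j
    by_cases hj : k+1 ≤ j
    · have hj' : j = (j-1)+1 := by omega
      have : {ω | k+1 ≤ j ∧ b ^ j * Y j ω ≤ δ ^ j} = {ω | b ^ j * Y j ω ≤ δ ^ j} := by
        ext ω; simp [hj]
      rw [this, hj']
      exact measurableSet_le (measurable_const.mul (hYm (j-1))) measurable_const
    · have : {ω | k+1 ≤ j ∧ b ^ j * Y j ω ≤ δ ^ j} = ∅ := by
        ext ω; simp [hj]
      rw [this]; exact MeasurableSet.empty
  -- tail bound for J
  have hAtail : ∀ k : ℕ, P {ω | ((k+1:ℕ):ℕ∞) < Jdelta b δ Y ω}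
      ≤ (C * (1 - ρ)⁻¹) * ρ ^ (k+1) := by
    intro k
    have hsub : {ω | ((k+1:ℕ):ℕ∞) < Jdelta b δ Y ω}
        ⊆ ⋃ i : ℕ, {ω | b ^ (k+1+i) * Y (k+1+i) ω ≤ δ ^ (k+1+i)} := by
      intro ω hω
      obtain ⟨j, hj1, hj2⟩ := (hJgt k ω).1 hω
      refine mem_iUnion.2 ⟨j - (k+1), ?_⟩
      rw [show k+1+(j-(k+1)) = j from by omega]
      exact hj2
    calc P {ω | ((k+1:ℕ):ℕ∞) < Jdelta b δ Y ω}
        ≤ P (⋃ i : ℕ, {ω | b ^ (k+1+i) * Y (k+1+i) ω ≤ δ ^ (k+1+i)}) := measure_mono hsub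
      _ ≤ ∑' i : ℕ, P {ω | b ^ (k+1+i) * Y (k+1+i) ω ≤ δ ^ (k+1+i)} := measure_iUnion_le _
      _ ≤ ∑' i : ℕ, C * ρ ^ (k+1+i) := ENNReal.tsum_le_tsum fun i => by
          have h := hA (k+i)
          rw [show k+1+i = (k+i)+1 from by omega]
          exact h
      _ = (C * (1 - ρ)⁻¹) * ρ ^ (k+1) := by
          simp_rw [pow_add, ← mul_assoc]
          rw [ENNReal.tsum_mul_left, ENNReal.tsum_geometric]
          ring
  have hCfin' : C * (1 - ρ)⁻¹ ≠ ⊤ := by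
    apply ENNReal.mul_ne_top hCfin
    rw [Ne, ENNReal.inv_eq_top, tsub_eq_zero_iff_le]
    exact not_le.2 hρ1
  -- J is a.e. finite
  have hJtop : P {ω | Jdelta b δ Y ω = ⊤} = 0 := by
    have hble : ∀ k : ℕ, P {ω | Jdelta b δ Y ω = ⊤} ≤ (C * (1 - ρ)⁻¹) * ρ ^ (k+1) := by
      intro k
      refine (measure_mono ?_).trans (hAtail k)
      intro ω hω
      show ((k+1:ℕ):ℕ∞) < Jdelta b δ Y ω
      rw [show Jdelta b δ Y ω = ⊤ from hω]
      exact lt_top_iff_ne_top.2 (ENat.coe_ne_top _)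
    have hlim : Filter.Tendsto (fun k : ℕ => (C * (1 - ρ)⁻¹) * ρ ^ (k+1))
        Filter.atTop (nhds 0) := by
      have h1 : Filter.Tendsto (fun k : ℕ => ρ ^ (k+1)) Filter.atTop (nhds 0) :=
        (ENNReal.tendsto_pow_atTop_nhds_zero_of_lt_one hρ1).comp
          (Filter.tendsto_add_atTop_nat 1)
      simpa using ENNReal.Tendsto.const_mul h1 (Or.inr hCfin')
    exact le_antisymm (ge_of_tendsto' hlim hble) zero_le
  have hae_ne : ∀ᵐ ω ∂P, Jdelta b δ Y ω ≠ ⊤ := by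
    rw [ae_iff]
    convert hJtop using 2
    simp [not_not]
  -- measurability of the level sets (including level 0)
  have hmeasset : ∀ n : ℕ, MeasurableSet {ω | ((n:ℕ):ℕ∞) < Jdelta b δ Y ω} := by
    intro n
    cases n with
    | zero =>
      have : {ω | ((0:ℕ):ℕ∞) < Jdelta b δ Y ω} = univ := by
        ext ω
        simp only [mem_setOf_eq, mem_univ, iff_true]
        exact lt_of_lt_of_le (by norm_num) (hJ1 ω)
      rw [this]; exact MeasurableSet.univ
    | succ k => exact hJsetm k
  -- rewrite the integrand a.e.
  have hint_eq : (∫⁻ ω, (if Jdelta b δ Y ω = ⊤ then (⊤:ℝ≥0∞)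
        else ENNReal.ofReal (Real.exp (s * ((Jdelta b δ Y ω).toNat : ℝ)))) ∂P)
      = ∫⁻ ω, ENNReal.ofReal (Real.exp (s * ((Jdelta b δ Y ω).toNat : ℝ))) ∂P := by
    apply lintegral_congr_ae
    filter_upwards [hae_ne] with ω hω
    rw [if_neg hω]
  rw [hint_eq]
  -- pointwise bound by a sum of indicators
  have hpt : ∀ᵐ ω ∂P, ENNReal.ofReal (Real.exp (s * ((Jdelta b δ Y ω).toNat : ℝ)))
      ≤ ∑' n : ℕ, ({ω' | ((n:ℕ):ℕ∞) < Jdelta b δ Y ω'}).indicator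
          (fun _ => q ^ (n+1)) ω := by
    filter_upwards [hae_ne] with ω hω
    set m := (Jdelta b δ Y ω).toNat with hm
    have hJm : Jdelta b δ Y ω = (m : ℕ∞) := by rw [hm]; exact (ENat.coe_toNat hω).symm
    have hm1 : 1 ≤ m := by
      have h := hJ1 ω
      rw [hJm] at h
      exact_mod_cast h
    have hval : ENNReal.ofReal (Real.exp (s * (m:ℝ))) = q ^ m := by
      rw [mul_comm, Real.exp_nat_mul, ENNReal.ofReal_pow (Real.exp_nonneg s)]
    rw [hval]
    have hstep : q ^ m ≤ ({ω' | ((m-1:ℕ):ℕ∞) < Jdelta b δ Y ω'}).indicator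
        (fun _ => q ^ (m-1+1)) ω := by
      rw [indicator_of_mem]
      · rw [show m-1+1 = m from by omega]
      · show ((m-1:ℕ):ℕ∞) < Jdelta b δ Y ω
        rw [hJm]
        exact_mod_cast (by omega : m - 1 < m)
    exact hstep.trans (ENNReal.le_tsum (m-1))
  -- final computation
  calc ∫⁻ ω, ENNReal.ofReal (Real.exp (s * ((Jdelta b δ Y ω).toNat : ℝ))) ∂P
      ≤ ∫⁻ ω, ∑' n : ℕ, ({ω' | ((n:ℕ):ℕ∞) < Jdelta b δ Y ω'}).indicator
          (fun _ => q ^ (n+1)) ω ∂P := lintegral_mono_ae hpt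
    _ = ∑' n : ℕ, ∫⁻ ω, ({ω' | ((n:ℕ):ℕ∞) < Jdelta b δ Y ω'}).indicator
          (fun _ => q ^ (n+1)) ω ∂P :=
        lintegral_tsum fun n => (measurable_const.indicator (hmeasset n)).aemeasurable
    _ = ∑' n : ℕ, q ^ (n+1) * P {ω | ((n:ℕ):ℕ∞) < Jdelta b δ Y ω} := by
        refine tsum_congr fun n => ?_
        rw [lintegral_indicator (hmeasset n), setLIntegral_const]
    _ ≤ ∑' n : ℕ, q ^ (n+1) * ((C * (1 - ρ)⁻¹ + 1) * ρ ^ n) := by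
        refine ENNReal.tsum_le_tsum fun n => mul_le_mul_right ?_ _
        cases n with
        | zero =>
          calc P {ω | ((0:ℕ):ℕ∞) < Jdelta b δ Y ω} ≤ 1 := prob_le_one
            _ ≤ (C * (1 - ρ)⁻¹ + 1) * ρ ^ 0 := by
              rw [pow_zero, mul_one]; exact le_add_self
        | succ k =>
          exact (hAtail k).trans (mul_le_mul_left (self_le_add_right _ 1) _)
    _ = (q * (C * (1 - ρ)⁻¹ + 1)) * ∑' n : ℕ, (q * ρ) ^ n := by
        rw [← ENNReal.tsum_mul_left]
        exact tsum_congr fun n => by rw [mul_pow, pow_succ]; ring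
    _ < ⊤ := by
        rw [ENNReal.tsum_geometric]
        apply ENNReal.mul_lt_top
        · exact ENNReal.mul_lt_top hqtop.lt_top
            (ENNReal.add_lt_top.2 ⟨hCfin'.lt_top, ENNReal.one_lt_top⟩)
        · rw [ENNReal.inv_lt_top, tsub_pos_iff_lt]
          exact hqρ
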